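/- For every n ≥ 1 and every permutation w of {1,…,n}, dep(w) ≤ ⌊n²/4⌋, and there exists a permutation w of {1,…,n} with dep(w) = ⌊n²/4⌋. -/

import Mathlib

/-- The depth of a permutation `w` of `{1,…,n}`:
`dep(w) = ∑_{i : w(i) > i} (w(i) - i)`. -/
def dep {n : ℕ} (w : Equiv.Perm (Fin n)) : ℕ :=
  ∑ i ∈ Finset.univ.filter (fun i : Fin n => i < w i), ((w i : ℕ) - (i : ℕ))

/-- Auxiliary sum of mins. -/
def Smin (n : ℕ) : ℕ := ∑ k ∈ Finset.range n, min (k + 1) (n - 1 - k)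

lemma Smin_step (n : ℕ) : Smin (n + 2) = Smin n + (n + 1) := by
  unfold Smin
  rw [Finset.sum_range_succ']
  have h0 : min (0 + 1) (n + 2 - 1 - 0) = 1 := by omega
  rw [h0, Finset.sum_range_succ]
  have hl : min (n + 1 + 1) (n + 2 - 1 - (n + 1)) = 0 := by omega
  rw [hl]
  have : ∀ k ∈ Finset.range n, min (k + 1 + 1) (n + 2 - 1 - (k + 1))
      = min (k + 1) (n - 1 - k) + 1 := by
    intro k hk
    simp only [Finset.mem_range] at hk
    omega
  rw [Finset.sum_congr rfl this, Finset.sum_add_distrib, Finset.sum_const,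
    Finset.card_range, smul_eq_mul, mul_one]
  omega

lemma Smin_eq : ∀ n, Smin n = n ^ 2 / 4
  | 0 => by simp [Smin]
  | 1 => by simp [Smin]
  | (n + 2) => by
      rw [Smin_step, Smin_eq n]
      have h : (n + 2) ^ 2 = n ^ 2 + (4 * n + 4) := by ring
      omega

lemma Trev_step (n : ℕ) :
    ∑ i ∈ Finset.range (n + 2), (n + 2 - 1 - i - i)
      = (∑ i ∈ Finset.range n, (n - 1 - i - i)) + (n + 1) := by
  rw [Finset.sum_range_succ']
  have h0 : n + 2 - 1 - 0 - 0 = n + 1 := by omega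
  rw [h0, Finset.sum_range_succ]
  have hl : n + 2 - 1 - (n + 1) - (n + 1) = 0 := by omega
  rw [hl]
  have : ∀ k ∈ Finset.range n, n + 2 - 1 - (k + 1) - (k + 1) = n - 1 - k - k := by
    intro k hk; omega
  rw [Finset.sum_congr rfl this]
  omega

lemma Trev_eq : ∀ n, (∑ i ∈ Finset.range n, (n - 1 - i - i)) = n ^ 2 / 4
  | 0 => by simp
  | 1 => by simp
  | (n + 2) => by
      rw [Trev_step, Trev_eq n]
      have h : (n + 2) ^ 2 = n ^ 2 + (4 * n + 4) := by ring
      omega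

lemma dep_eq_sum_counts {n : ℕ} (w : Equiv.Perm (Fin n)) :
    dep w = ∑ k ∈ Finset.range n,
      (Finset.univ.filter (fun i : Fin n => (i : ℕ) ≤ k ∧ k < (w i : ℕ))).card := by
  have h1 : dep w = ∑ i : Fin n, ((w i : ℕ) - (i : ℕ)) := by
    rw [dep]
    apply Finset.sum_subset (Finset.filter_subset _ _)
    intro i _ hi
    simp only [Finset.mem_filter, Finset.mem_univ, true_and, Fin.lt_def, not_lt] at hi
    omega
  rw [h1]
  have h2 : ∀ i : Fin n, ((w i : ℕ) - (i : ℕ))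
      = ∑ k ∈ Finset.range n, (if (i : ℕ) ≤ k ∧ k < (w i : ℕ) then 1 else 0) := by
    intro i
    rw [← Finset.card_filter]
    have : (Finset.range n).filter (fun k => (i : ℕ) ≤ k ∧ k < (w i : ℕ))
        = Finset.Ico (i : ℕ) ((w i : ℕ)) := by
      ext k
      simp only [Finset.mem_filter, Finset.mem_range, Finset.mem_Ico]
      have := (w i).isLt
      omega
    rw [this, Nat.card_Ico]
  rw [Finset.sum_congr rfl (fun i _ => h2 i), Finset.sum_comm]
  refine Finset.sum_congr rfl fun k _ => ?_
  rw [Finset.card_filter]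

lemma count_le {n : ℕ} (w : Equiv.Perm (Fin n)) (k : ℕ) (hk : k < n) :
    (Finset.univ.filter (fun i : Fin n => (i : ℕ) ≤ k ∧ k < (w i : ℕ))).card
      ≤ min (k + 1) (n - 1 - k) := by
  have h1 : (Finset.univ.filter (fun i : Fin n => (i : ℕ) ≤ k ∧ k < (w i : ℕ))).card
      ≤ (Finset.range (k + 1)).card := by
    refine Finset.card_le_card_of_injOn (fun i => (i : ℕ)) ?_ ?_
    · intro i hi
      simp only [Finset.mem_coe, Finset.mem_filter, Finset.mem_univ, true_and] at hi
      simp only [Finset.mem_coe, Finset.mem_range]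
      omega
    · intro a _ b _ h
      exact Fin.ext h
  have h2 : (Finset.univ.filter (fun i : Fin n => (i : ℕ) ≤ k ∧ k < (w i : ℕ))).card
      ≤ (Finset.Ico (k + 1) n).card := by
    refine Finset.card_le_card_of_injOn (fun i => ((w i : ℕ))) ?_ ?_
    · intro i hi
      simp only [Finset.mem_coe, Finset.mem_filter, Finset.mem_univ, true_and] at hi
      simp only [Finset.mem_coe, Finset.mem_Ico]
      exact ⟨by omega, (w i).isLt⟩
    · intro a _ b _ h
      exact w.injective (Fin.ext h)
  rw [Finset.card_range] at h1
  rw [Nat.card_Ico] at h2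
  omega

lemma dep_rev (n : ℕ) : dep (Fin.revPerm : Equiv.Perm (Fin n)) = n ^ 2 / 4 := by
  have h1 : dep (Fin.revPerm : Equiv.Perm (Fin n))
      = ∑ i : Fin n, ((Fin.revPerm i : ℕ) - (i : ℕ)) := by
    rw [dep]
    apply Finset.sum_subset (Finset.filter_subset _ _)
    intro i _ hi
    simp only [Finset.mem_filter, Finset.mem_univ, true_and, Fin.lt_def, not_lt] at hi
    omega
  rw [h1]
  have h2 : ∀ i : Fin n, ((Fin.revPerm i : ℕ) - (i : ℕ)) = n - 1 - (i : ℕ) - (i : ℕ) := by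
    intro i
    have := (i : Fin n).isLt
    simp only [Fin.revPerm_apply, Fin.val_rev]
    omega
  rw [Finset.sum_congr rfl (fun i _ => h2 i),
    Fin.sum_univ_eq_sum_range (fun m => n - 1 - m - m) n]
  exact Trev_eq n

/-- For every `n ≥ 1`, every permutation `w` of `{1,…,n}` satisfies
`dep(w) ≤ ⌊n²/4⌋`, and some permutation attains this bound. -/
theorem dep_le_and_attained (n : ℕ) (hn : 1 ≤ n) :
    (∀ w : Equiv.Perm (Fin n), dep w ≤ n ^ 2 / 4) ∧
    (∃ w : Equiv.Perm (Fin n), dep w = n ^ 2 / 4) := by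
  constructor
  · intro w
    rw [dep_eq_sum_counts w, ← Smin_eq n]
    unfold Smin
    apply Finset.sum_le_sum
    intro k hk
    exact count_le w k (Finset.mem_range.mp hk)
  · exact ⟨Fin.revPerm, dep_rev n⟩
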